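/- For all t > 0, f(t)/2 < t·f'(t) < f(t), and the reverse inequalities hold for t < 0. -/

import Mathlib

open Real

noncomputable def Faux (y : ℝ) : ℝ :=
  y * Real.sqrt (1 + 2 * y ^ 2) / 2 + Real.arsinh (Real.sqrt 2 * y) / (2 * Real.sqrt 2)

lemma one_add_pos (y : ℝ) : (0:ℝ) < 1 + 2 * y ^ 2 := by positivity

lemma sqrt_pos' (y : ℝ) : 0 < Real.sqrt (1 + 2 * y ^ 2) :=
  Real.sqrt_pos.mpr (one_add_pos y)

lemma hFderiv (y : ℝ) : HasDerivAt Faux (Real.sqrt (1 + 2 * y ^ 2)) y := by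
  have h0 : (0:ℝ) < 1 + 2 * y ^ 2 := one_add_pos y
  have hs : 0 < Real.sqrt (1 + 2 * y ^ 2) := sqrt_pos' y
  have h1 : HasDerivAt (fun y : ℝ => 1 + 2 * y ^ 2) (4 * y) y := by
    have := ((hasDerivAt_pow 2 y).const_mul 2).const_add 1
    refine this.congr_deriv ?_
    ring
  have h2 : HasDerivAt (fun y : ℝ => Real.sqrt (1 + 2 * y ^ 2))
      (4 * y / (2 * Real.sqrt (1 + 2 * y ^ 2))) y :=
    (Real.hasDerivAt_sqrt (ne_of_gt h0)).comp y h1 |>.congr_deriv (by ring)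
  have h3 : HasDerivAt (fun y : ℝ => y * Real.sqrt (1 + 2 * y ^ 2) / 2)
      ((Real.sqrt (1 + 2 * y ^ 2) + y * (4 * y / (2 * Real.sqrt (1 + 2 * y ^ 2)))) / 2) y :=
    ((hasDerivAt_id' y).mul h2).div_const 2 |>.congr_deriv (by ring)
  have h5 : HasDerivAt (fun y : ℝ => Real.sqrt 2 * y) (Real.sqrt 2) y := by
    simpa using (hasDerivAt_id y).const_mul (Real.sqrt 2)
  have h4 : HasDerivAt (fun y : ℝ => Real.arsinh (Real.sqrt 2 * y) / (2 * Real.sqrt 2))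
      ((Real.sqrt (1 + (Real.sqrt 2 * y) ^ 2))⁻¹ * Real.sqrt 2 / (2 * Real.sqrt 2)) y :=
    ((Real.hasDerivAt_arsinh _).comp y h5).div_const _
  have h6 : (Real.sqrt 2 * y) ^ 2 = 2 * y ^ 2 := by
    rw [mul_pow, Real.sq_sqrt (by norm_num : (0:ℝ) ≤ 2)]
  have := h3.add h4
  refine this.congr_deriv ?_
  rw [h6]
  have h2pos : (0:ℝ) < Real.sqrt 2 := by positivity
  have hss : Real.sqrt (1 + 2 * y ^ 2) * Real.sqrt (1 + 2 * y ^ 2) = 1 + 2 * y ^ 2 :=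
    Real.mul_self_sqrt h0.le
  have h22 : Real.sqrt 2 * Real.sqrt 2 = 2 := Real.mul_self_sqrt (by norm_num)
  have hcube : Real.sqrt (1 + 2 * y ^ 2) ^ 3 = (1 + 2 * y ^ 2) * Real.sqrt (1 + 2 * y ^ 2) := by
    rw [pow_succ, pow_two, hss]
  have hc2 : Real.sqrt (1 + 2 * y ^ 2) ^ 3 * Real.sqrt 2
      = (1 + 2 * y ^ 2) * Real.sqrt (1 + 2 * y ^ 2) * Real.sqrt 2 := by rw [hcube]
  field_simp
  nlinarith [hc2]

lemma FauxMono : StrictMono Faux := by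
  apply strictMono_of_deriv_pos
  intro y
  rw [(hFderiv y).deriv]
  exact sqrt_pos' y

lemma Faux_zero : Faux 0 = 0 := by simp [Faux]

theorem stmt_2 (f : ℝ → ℝ) (hf0 : f 0 = 0) (hodd : ∀ t : ℝ, f (-t) = -f t)
    (hf1 : ∀ t : ℝ, 0 ≤ t → HasDerivAt f ((1 + 2 * f t ^ 2) ^ (-(1/2) : ℝ)) t) :
    (∀ t : ℝ, 0 < t → f t / 2 < t * deriv f t ∧ t * deriv f t < f t) ∧
    (∀ t : ℝ, t < 0 → f t < t * deriv f t ∧ t * deriv f t < f t / 2) := by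
  have hg : ∀ t : ℝ, ((1 + 2 * f t ^ 2 : ℝ) ^ (-(1/2) : ℝ)) =
      (Real.sqrt (1 + 2 * f t ^ 2))⁻¹ := by
    intro t
    rw [Real.rpow_neg (le_of_lt (one_add_pos _)), Real.sqrt_eq_rpow]
  -- key : Faux (f t) = t for t ≥ 0
  have key : ∀ t : ℝ, 0 ≤ t → Faux (f t) = t := by
    intro t ht
    rcases eq_or_lt_of_le ht with rfl | ht
    · rw [hf0, Faux_zero]
    have hcomp : ∀ x ∈ Set.Icc (0:ℝ) t, HasDerivAt (fun x => Faux (f x) - x) 0 x := by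
      intro x hx
      have hdx := hf1 x hx.1
      have hF := (hFderiv (f x)).comp x hdx
      have : HasDerivAt (fun x => Faux (f x) - x)
          (Real.sqrt (1 + 2 * f x ^ 2) * ((1 + 2 * f x ^ 2 : ℝ) ^ (-(1/2) : ℝ)) - 1) x :=
        hF.sub (hasDerivAt_id x)
      convert this using 1
      rw [hg x, mul_inv_cancel₀ (ne_of_gt (sqrt_pos' _))]
      ring
    have := constant_of_has_deriv_right_zero
      (f := fun x => Faux (f x) - x) (a := 0) (b := t)
      (fun x hx => ((hcomp x hx).continuousAt).continuousWithinAt)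
      (fun x hx => ((hcomp x ⟨hx.1, le_of_lt hx.2⟩).hasDerivWithinAt))
      t (Set.right_mem_Icc.mpr (le_of_lt ht))
    simp only [hf0, Faux_zero] at this
    linarith
  -- positivity of f on positives
  have fpos : ∀ t : ℝ, 0 < t → 0 < f t := by
    intro t ht
    by_contra h
    push_neg at h
    have : Faux (f t) ≤ Faux 0 := FauxMono.le_iff_le.mpr h
    rw [Faux_zero, key t (le_of_lt ht)] at this
    linarith
  -- main inequalities for positive t
  have main : ∀ t : ℝ, 0 < t → f t / 2 < t * deriv f t ∧ t * deriv f t < f t := by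
    intro t ht
    have hd := hf1 t (le_of_lt ht)
    rw [hd.deriv, hg t]
    set y := f t with hy
    have hy0 : 0 < y := fpos t ht
    have ht' : t = Faux y := (key t (le_of_lt ht)).symm
    set sq := Real.sqrt (1 + 2 * y ^ 2) with hsq
    have hsqpos : 0 < sq := sqrt_pos' y
    have hsq1 : 1 ≤ sq := by
      nlinarith [Real.sq_sqrt (one_add_pos y).le, hsqpos, sq_nonneg y]
    have h2pos : (0:ℝ) < Real.sqrt 2 := by positivity
    have ha_pos : 0 < Real.arsinh (Real.sqrt 2 * y) := by
      rw [show (0:ℝ) = Real.arsinh 0 by simp]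
      exact Real.arsinh_lt_arsinh.mpr (by positivity)
    have ha_lt : Real.arsinh (Real.sqrt 2 * y) < Real.sqrt 2 * y := by
      have h := Real.self_lt_sinh_iff.mpr (show (0:ℝ) < Real.sqrt 2 * y by positivity)
      calc Real.arsinh (Real.sqrt 2 * y) < Real.arsinh (Real.sinh (Real.sqrt 2 * y)) :=
            Real.arsinh_lt_arsinh.mpr h
        _ = Real.sqrt 2 * y := Real.arsinh_sinh _
    rw [ht']
    have hFy : Faux y = y * sq / 2 + Real.arsinh (Real.sqrt 2 * y) / (2 * Real.sqrt 2) := rfl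
    rw [← div_eq_mul_inv]
    constructor
    · rw [lt_div_iff₀ hsqpos, hFy]
      have : 0 < Real.arsinh (Real.sqrt 2 * y) / (2 * Real.sqrt 2) := by positivity
      nlinarith
    · rw [div_lt_iff₀ hsqpos, hFy]
      have ha2 : Real.arsinh (Real.sqrt 2 * y) / (2 * Real.sqrt 2) < y * sq / 2 := by
        rw [div_lt_div_iff₀ (by positivity) (by norm_num : (0:ℝ) < 2)]
        nlinarith [mul_le_mul_of_nonneg_left hsq1
          (show (0:ℝ) ≤ 2 * Real.sqrt 2 * y by positivity)]
      linarith
  refine ⟨main, ?_⟩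
  -- negative part via oddness
  intro t ht
  have hs : 0 < -t := by linarith
  have hderivneg : HasDerivAt f ((1 + 2 * f t ^ 2 : ℝ) ^ (-(1/2) : ℝ)) t := by
    have hd := hf1 (-t) hs.le
    have hcomp := hd.comp t (hasDerivAt_neg t)
    have hneg : HasDerivAt (fun x => -f (-x))
        (-((1 + 2 * f (-t) ^ 2 : ℝ) ^ (-(1/2) : ℝ) * (-1))) t := hcomp.neg
    have heq : (fun x => -f (-x)) = f := by
      funext x
      rw [hodd x]; ring
    rw [heq] at hneg
    have hsqeq : f (-t) ^ 2 = f t ^ 2 := by rw [hodd t]; ring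
    convert hneg using 1
    rw [hsqeq]; ring
  rw [hderivneg.deriv]
  obtain ⟨h1, h2⟩ := main (-t) hs
  have hdpos := (hf1 (-t) hs.le).deriv
  rw [hdpos] at h1 h2
  have hsqeq : f (-t) ^ 2 = f t ^ 2 := by rw [hodd t]; ring
  rw [hsqeq] at h1 h2
  rw [hodd t] at h1 h2
  constructor <;> nlinarith
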